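/- It is impossible for a 3-strategy game with zero diagonal and all α_i, β_i > 0 (so all three edges have stable mixed equilibria) to have exactly one or zero of the three edge equilibria invadable by the missing strategy. Equivalently: if the numerators of ρ₁ and ρ₂ are both negative, i.e., β₁β₂ + α₁α₃ < α₁β₁ and β₂β₃ + α₁α₂ < α₂β₂, a contradiction follows. (After the projective normalization α₁=α₂=α₃=1, the conditions β₁β₂ + 1 < β₁ and β₂β₃ + 1 < β₂ with all β_i > 0 are inconsistent, since the second forces β₂ > 1 making the first impossible.) -/
import Mathlib

/-- **Impossibility of one or zero invadable edge equilibria.**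
For a three-strategy game with zero diagonal and all `αᵢ, βᵢ > 0` (so that all three edges
carry stable mixed equilibria), it is impossible that the numerators of `ρ₁` and `ρ₂` are
both negative, i.e. that `β₁β₂ + α₁α₃ < α₁β₁` and `β₂β₃ + α₂α₁ < α₂β₂` hold
simultaneously; hence at least two of the three edge equilibria are invadable.  In the
projectively normalized form `α₁ = α₂ = α₃ = 1`: for `β₁, β₂, β₃ > 0` the conditions
`β₁β₂ + 1 < β₁` and `β₂β₃ + 1 < β₂` are inconsistent. -/
theorem no_two_noninvadable_edges
    (α1 α2 α3 β1 β2 β3 : ℝ)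
    (hα1 : 0 < α1) (hα2 : 0 < α2) (hα3 : 0 < α3)
    (hβ1 : 0 < β1) (hβ2 : 0 < β2) (hβ3 : 0 < β3) :
    ¬(β1 * β2 + α1 * α3 < α1 * β1 ∧ β2 * β3 + α2 * α1 < α2 * β2) ∧
    (∀ b1 b2 b3 : ℝ, 0 < b1 → 0 < b2 → 0 < b3 →
      ¬(b1 * b2 + 1 < b1 ∧ b2 * b3 + 1 < b2)) := by
  constructor
  · rintro ⟨h1, h2⟩
    nlinarith [mul_pos hβ2 hβ3, mul_pos hα1 hα3, mul_pos hβ1 hβ2, mul_pos hβ1 hα1]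
  · rintro b1 b2 b3 hb1 hb2 hb3 ⟨h1, h2⟩
    nlinarith [mul_pos hb2 hb3, mul_pos hb1 hb2]
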